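/- Let A be an additive commutative group, t : A ≃+ A an automorphism, m a natural number, M an m × m integer matrix such that the determinant of Mᵀ − M is a unit in ℤ (i.e. det(Mᵀ − M) = ±1), and V : Fin m → A a vector satisfying the twisted Seifert equation ∑_j (M i j) • t(V j) = ∑_j (M j i) • V j for every i, and whose entries generate A (AddSubgroup.closure (Set.range V) = ⊤). Then A admits a generating set of cardinality at most the rank of M: there exists a finite set s ⊆ A with s.card ≤ Matrix.rank M and AddSubgroup.closure s = ⊤. (This is the key step 'Rank(M) is bounded below by Rank(V)' in the proof of Corollary 11.) -/

import Mathlib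

open Matrix

/-- Corollary 11 (key step): if the surface data `(M, V)` satisfies the twisted Seifert equation,
`det (Mᵀ − M)` is a unit and the entries of `V` generate `A`, then `A` has a generating set of
cardinality at most `rank M`. -/
theorem generating_set_card_le_rank {A : Type*} [AddCommGroup A] (t : A ≃+ A)
    (m : ℕ) (M : Matrix (Fin m) (Fin m) ℤ)
    (hdet : IsUnit (Mᵀ - M).det)
    (V : Fin m → A)
    (hseifert : ∀ i, ∑ j, M i j • t (V j) = ∑ j, M j i • V j)
    (hgen : AddSubgroup.closure (Set.range V) = ⊤) :
    ∃ s : Finset A, s.card ≤ M.rank ∧ AddSubgroup.closure (s : Set A) = ⊤ := by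
  classical
  set B : Matrix (Fin m) (Fin m) ℤ := Mᵀ - M with hB
  set w : Fin m → A := fun j => t (V j) - V j with hw
  set U : Fin m → A := fun i => ∑ j, M i j • w j with hUdef
  -- Step 1: (Mᵀ - M) V = U
  have hBV : ∀ i, ∑ j, B i j • V j = U i := by
    intro i
    have : ∑ j, B i j • V j = (∑ j, M j i • V j) - ∑ j, M i j • V j := by
      rw [← Finset.sum_sub_distrib]
      refine Finset.sum_congr rfl fun j _ => ?_
      simp [hB, Matrix.sub_apply, Matrix.transpose_apply, sub_smul]
    rw [this, ← hseifert i, hUdef]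
    rw [← Finset.sum_sub_distrib]
    refine Finset.sum_congr rfl fun j _ => ?_
    simp [hw, smul_sub]
  -- Step 2: V = B⁻¹ U
  have hVU : ∀ i, V i = ∑ k, B⁻¹ i k • U k := by
    intro i
    have h1 : ∀ k, B⁻¹ i k • U k = ∑ j, (B⁻¹ i k * B k j) • V j := by
      intro k
      rw [← hBV k, Finset.smul_sum]
      exact Finset.sum_congr rfl fun j _ => smul_smul _ _ _
    calc V i = ∑ j, (1 : Matrix (Fin m) (Fin m) ℤ) i j • V j := by
              simp [Matrix.one_apply, Finset.sum_ite_eq, ite_smul]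
      _ = ∑ j, (B⁻¹ * B) i j • V j := by rw [Matrix.nonsing_inv_mul B hdet]
      _ = ∑ j, (∑ k, B⁻¹ i k * B k j) • V j := by
              refine Finset.sum_congr rfl fun j _ => ?_
              rw [Matrix.mul_apply]
      _ = ∑ j, ∑ k, (B⁻¹ i k * B k j) • V j := by
              refine Finset.sum_congr rfl fun j _ => ?_
              rw [Finset.sum_smul]
      _ = ∑ k, ∑ j, (B⁻¹ i k * B k j) • V j := Finset.sum_comm
      _ = ∑ k, B⁻¹ i k • U k := by
              exact Finset.sum_congr rfl fun k _ => (h1 k).symm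
  -- column space of M
  set C : Submodule ℤ (Fin m → ℤ) := LinearMap.range M.mulVecLin with hC
  have hfin : Module.Finite ℤ C := Module.Finite.iff_fg.mpr (IsNoetherian.noetherian C)
  have hfree : Module.Free ℤ C := Module.free_of_finite_type_torsion_free'
  let c : Module.Basis (Fin (Module.finrank ℤ C)) ℤ C := Module.finBasis ℤ C
  -- columns of M lie in C
  have hcol : ∀ j, (fun i => M i j) ∈ C := by
    intro j
    refine ⟨Pi.single j 1, ?_⟩
    ext i
    simp [Matrix.mulVecLin_apply, Matrix.mulVec, dotProduct, Pi.single_apply,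
      Finset.sum_ite_eq']
  -- coordinates of columns
  set d : Fin m → Fin (Module.finrank ℤ C) → ℤ := fun j k => c.repr ⟨_, hcol j⟩ k with hd
  have hMd : ∀ i j, M i j = ∑ k, d j k * (c k : Fin m → ℤ) i := by
    intro i j
    have := c.sum_repr ⟨_, hcol j⟩
    have h2 := congrArg (fun (x : C) => (x : Fin m → ℤ) i) this
    simp only [Submodule.coe_sum, Submodule.coe_smul, Finset.sum_apply, Pi.smul_apply,
      smul_eq_mul] at h2
    exact h2.symm
  -- generators
  set g : Fin (Module.finrank ℤ C) → A := fun k => ∑ j, d j k • w j with hg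
  refine ⟨Finset.image g Finset.univ, ?_, ?_⟩
  · calc (Finset.image g Finset.univ).card ≤ Finset.univ.card := Finset.card_image_le
      _ = Module.finrank ℤ C := by simp
      _ = M.rank := rfl
  · set s : Finset A := Finset.image g Finset.univ with hs
    have hUmem : ∀ i, U i ∈ AddSubgroup.closure (s : Set A) := by
      intro i
      have : U i = ∑ k, (c k : Fin m → ℤ) i • g k := by
        calc U i = ∑ j, (∑ k, d j k * (c k : Fin m → ℤ) i) • w j := by
                refine Finset.sum_congr rfl fun j _ => ?_
                rw [← hMd i j]
          _ = ∑ j, ∑ k, (d j k * (c k : Fin m → ℤ) i) • w j := by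
                refine Finset.sum_congr rfl fun j _ => ?_
                rw [Finset.sum_smul]
          _ = ∑ k, ∑ j, (d j k * (c k : Fin m → ℤ) i) • w j := Finset.sum_comm
          _ = ∑ k, (c k : Fin m → ℤ) i • g k := by
                refine Finset.sum_congr rfl fun k _ => ?_
                rw [hg, Finset.smul_sum]
                refine Finset.sum_congr rfl fun j _ => ?_
                rw [smul_smul, mul_comm]
      rw [this]
      refine AddSubgroup.sum_mem _ fun k _ => AddSubgroup.zsmul_mem _ ?_ _
      exact AddSubgroup.subset_closure (by simp [hs])
    have hVmem : ∀ i, V i ∈ AddSubgroup.closure (s : Set A) := by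
      intro i
      rw [hVU i]
      exact AddSubgroup.sum_mem _ fun k _ => AddSubgroup.zsmul_mem _ (hUmem k) _
    rw [eq_top_iff, ← hgen]
    rw [AddSubgroup.closure_le]
    rintro x ⟨i, rfl⟩
    exact hVmem i
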